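/- Let n ≥ 2 be even, n = 2ν, and let q(y) = Σ_{j=0}^{ν} x_j y^{ν−j} be defined via ((u+v)^{n+2} − u^{n+2} − v^{n+2})/(uv) = Σ_{j=0}^{ν} x_j (u+v)^{n−2j}(uv)^j. Then for every 1 ≤ j ≤ ν−1, the j-th derivative satisfies q^{(j)}(2) = (j!/2^{j−1})·[2^ν·binomial(ν+1, j) − β_j], where β_j is the coefficient of y^j in the Chebyshev polynomial T_{ν+1}(y). -/

import Mathlib

open Polynomial

/-- For `n = 2ν` even, with `q(y) = ∑_{j=0}^{ν} x_j y^{ν−j}` defined via the identity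
`((u+v)^{n+2} − u^{n+2} − v^{n+2}) = uv ∑_j x_j (u+v)^{n−2j}(uv)^j`, the derivatives
of `q` at `2` satisfy `q^{(j)}(2) = (j!/2^{j−1})·(2^ν C(ν+1,j) − β_j)` for `1 ≤ j ≤ ν−1`,
where `β_j` is the `j`-th coefficient of the Chebyshev polynomial `T_{ν+1}`. -/
lemma my_T_real_cosh (n : ℤ) (t : ℝ) :
    (Polynomial.Chebyshev.T ℝ n).eval (Real.cosh t) = Real.cosh (n * t) := by
  have h := Polynomial.Chebyshev.T_complex_cos ((t : ℂ) * Complex.I) n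
  rw [Complex.cos_mul_I] at h
  apply Complex.ofReal_injective
  calc (Complex.ofReal ((Polynomial.Chebyshev.T ℝ n).eval (Real.cosh t)))
      = (Polynomial.Chebyshev.T ℂ n).eval ((Real.cosh t : ℝ) : ℂ) := by
        rw [← Polynomial.Chebyshev.map_T (algebraMap ℝ ℂ), Polynomial.eval_map,
          show ((Real.cosh t : ℝ) : ℂ) = algebraMap ℝ ℂ (Real.cosh t) from rfl,
          Polynomial.eval₂_at_apply]
        rfl
    _ = Complex.cos ((n : ℂ) * ((t : ℂ) * Complex.I)) := by rw [Complex.ofReal_cosh, h]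
    _ = Complex.cosh ((n : ℂ) * t) := by
        rw [show (n : ℂ) * ((t : ℂ) * Complex.I) = ((n : ℂ) * t) * Complex.I by ring,
          Complex.cos_mul_I]
    _ = ((Real.cosh ((n : ℝ) * t) : ℝ) : ℂ) := by rw [Complex.ofReal_cosh]; push_cast; ring_nf

theorem q_deriv_at_two_even (n ν : ℕ) (hn : 2 ≤ n) (hnν : n = 2 * ν)
    (x : ℕ → ℝ)
    (hx : ∀ u v : ℝ, (u + v) ^ (n + 2) - u ^ (n + 2) - v ^ (n + 2) =
      u * v * ∑ j ∈ Finset.range (ν + 1), x j * (u + v) ^ (n - 2 * j) * (u * v) ^ j)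
    (β : ℕ → ℝ)
    (hβ : ∀ θ : ℝ, Real.cos ((ν + 1) * θ) =
      ∑ l ∈ Finset.range (ν + 2), β l * (Real.cos θ) ^ l)
    (q : Polynomial ℝ)
    (hq : q = ∑ j ∈ Finset.range (ν + 1), C (x j) * X ^ (ν - j)) :
    ∀ j, 1 ≤ j → j ≤ ν - 1 →
      (derivative^[j] q).eval 2 =
        ((j.factorial : ℝ) / 2 ^ (j - 1)) * (2 ^ ν * ((ν + 1).choose j : ℝ) - β j) := by
  have hν : 1 ≤ ν := by omega
  -- Step 1: the β-polynomial is the Chebyshev polynomial T (ν+1)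
  have h1 : (∑ l ∈ Finset.range (ν + 2), C (β l) * X ^ l : ℝ[X]) =
      Polynomial.Chebyshev.T ℝ (ν + 1) := by
    apply Polynomial.eq_of_infinite_eval_eq
    apply Set.infinite_of_injective_forall_mem
      (f := fun k : ℕ => Real.cos (1 / ((k : ℝ) + 1)))
    · intro a b hab
      simp only at hab
      have hπ := Real.pi_gt_three
      have ha : 1 / ((a : ℝ) + 1) ∈ Set.Icc 0 Real.pi := by
        constructor
        · positivity
        · have : 1 / ((a : ℝ) + 1) ≤ 1 := by
            rw [div_le_one (by positivity)]; linarith [Nat.cast_nonneg (α := ℝ) a]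
          linarith
      have hb : 1 / ((b : ℝ) + 1) ∈ Set.Icc 0 Real.pi := by
        constructor
        · positivity
        · have : 1 / ((b : ℝ) + 1) ≤ 1 := by
            rw [div_le_one (by positivity)]; linarith [Nat.cast_nonneg (α := ℝ) b]
          linarith
      have h := Real.injOn_cos ha hb hab
      field_simp at h
      exact_mod_cast (by linarith : (a : ℝ) = b)
    · intro k
      simp only [Set.mem_setOf_eq, Polynomial.eval_finset_sum, Polynomial.eval_mul,
        Polynomial.eval_C, Polynomial.eval_pow, Polynomial.eval_X,
        Polynomial.Chebyshev.T_real_cos]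
      rw [← hβ]
      push_cast
      ring_nf
  -- Step 2: q equals the explicit polynomial P
  set P : ℝ[X] := X ^ (ν + 1) -
      C 2 * ∑ l ∈ Finset.range (ν + 2), C (β l / 2 ^ l) * (X - C 2) ^ l with hP
  have hqP : q = P := by
    apply Polynomial.eq_of_infinite_eval_eq
    apply Set.infinite_of_injective_forall_mem
      (f := fun k : ℕ => 2 + 2 * Real.cosh (2 * (k : ℝ)))
    · intro a b hab
      simp only [add_right_inj] at hab
      have h := mul_left_cancel₀ (two_ne_zero (α := ℝ)) hab
      have h2 := Real.cosh_strictMonoOn.injOn (Set.mem_Ici.2 (by positivity))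
        (Set.mem_Ici.2 (by positivity)) h
      have : ((a : ℝ)) = b := by linarith
      exact_mod_cast this
    · intro k
      set t : ℝ := (k : ℝ) with ht
      set u : ℝ := Real.exp t with hu
      set v : ℝ := Real.exp (-t) with hv
      have huv : u * v = 1 := by rw [hu, hv, ← Real.exp_add]; simp
      have hy : 2 + 2 * Real.cosh (2 * t) = (u + v) ^ 2 := by
        rw [Real.cosh_eq, hu, hv]
        have e1 : Real.exp t * Real.exp t = Real.exp (2 * t) := by
          rw [← Real.exp_add]; ring_nf
        have e2 : Real.exp (-t) * Real.exp (-t) = Real.exp (-(2 * t)) := by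
          rw [← Real.exp_add]; ring_nf
        have e3 : Real.exp t * Real.exp (-t) = 1 := by rw [← Real.exp_add]; simp
        nlinarith [e1, e2, e3]
      simp only [Set.mem_setOf_eq]
      have hql : q.eval (2 + 2 * Real.cosh (2 * t)) =
          (u + v) ^ (n + 2) - u ^ (n + 2) - v ^ (n + 2) := by
        rw [hx u v, huv, hq]
        simp only [Polynomial.eval_finset_sum, Polynomial.eval_mul, Polynomial.eval_C,
          Polynomial.eval_pow, Polynomial.eval_X, one_mul, one_pow, mul_one]
        apply Finset.sum_congr rfl
        intro j hj
        rw [Finset.mem_range] at hj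
        have hjν : j ≤ ν := by omega
        have : n - 2 * j = 2 * (ν - j) := by omega
        rw [this, hy, pow_mul]
      rw [hql]
      -- now the P side
      have hcosh : ∑ l ∈ Finset.range (ν + 2), β l / 2 ^ l * (2 * Real.cosh (2 * t)) ^ l =
          Real.cosh (((ν : ℝ) + 1) * (2 * t)) := by
        have := congrArg (Polynomial.eval (Real.cosh (2 * t))) h1
        simp only [Polynomial.eval_finset_sum, Polynomial.eval_mul, Polynomial.eval_C,
          Polynomial.eval_pow, Polynomial.eval_X] at this
        rw [my_T_real_cosh] at this
        calc ∑ l ∈ Finset.range (ν + 2), β l / 2 ^ l * (2 * Real.cosh (2 * t)) ^ l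
            = ∑ l ∈ Finset.range (ν + 2), β l * Real.cosh (2 * t) ^ l := by
              apply Finset.sum_congr rfl
              intro l _
              rw [mul_pow]
              field_simp
          _ = Real.cosh (((ν : ℝ) + 1) * (2 * t)) := by rw [this]; push_cast; ring_nf
      have hPev : P.eval (2 + 2 * Real.cosh (2 * t)) =
          (2 + 2 * Real.cosh (2 * t)) ^ (ν + 1) -
            2 * Real.cosh (((ν : ℝ) + 1) * (2 * t)) := by
        rw [hP]
        simp only [Polynomial.eval_sub, Polynomial.eval_mul, Polynomial.eval_pow,
          Polynomial.eval_X, Polynomial.eval_C, Polynomial.eval_finset_sum]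
        rw [← hcosh]
        congr 1
        congr 1
        apply Finset.sum_congr rfl
        intro l _
        congr 1
        ring_nf
      rw [hPev, hy]
      have hun : u ^ (n + 2) = Real.exp (((n : ℝ) + 2) * t) := by
        rw [hu, ← Real.exp_nat_mul]; push_cast; ring_nf
      have hvn : v ^ (n + 2) = Real.exp (-(((n : ℝ) + 2) * t)) := by
        rw [hv, ← Real.exp_nat_mul]; push_cast; ring_nf
      have hch : 2 * Real.cosh (((ν : ℝ) + 1) * (2 * t)) = u ^ (n + 2) + v ^ (n + 2) := by
        rw [Real.cosh_eq, hun, hvn]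
        have : ((ν : ℝ) + 1) * (2 * t) = ((n : ℝ) + 2) * t := by
          have : (n : ℝ) = 2 * ν := by exact_mod_cast hnν
          rw [this]; ring
        rw [this]; ring
      have hsq2 : ((u + v) ^ 2) ^ (ν + 1) = (u + v) ^ (n + 2) := by
        rw [← pow_mul]
        congr 1
        omega
      rw [hsq2, hch]
      ring
  -- Step 3: compute the derivatives of P at 2
  intro j hj1 hj2
  have hjν : j + 1 ≤ ν := by omega
  rw [hqP, hP]
  rw [Polynomial.iterate_derivative_sub, Polynomial.iterate_derivative_C_mul,
    Polynomial.iterate_derivative_sum]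
  simp only [Polynomial.iterate_derivative_X_pow_eq_C_mul,
    Polynomial.iterate_derivative_C_mul, Polynomial.iterate_derivative_X_sub_pow]
  simp only [Polynomial.eval_sub, Polynomial.eval_mul, Polynomial.eval_C,
    Polynomial.eval_pow, Polynomial.eval_X, Polynomial.eval_finset_sum,
    Polynomial.eval_smul, smul_eq_mul, nsmul_eq_mul, Polynomial.eval_natCast]
  have hsum : ∑ l ∈ Finset.range (ν + 2),
      β l / 2 ^ l * ((l.descFactorial j : ℝ) * ((2 : ℝ) - 2) ^ (l - j)) =
      β j / 2 ^ j * (j.factorial : ℝ) := by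
    rw [Finset.sum_eq_single j]
    · rw [Nat.sub_self, pow_zero, Nat.descFactorial_self, mul_one]
    · intro l _ hlj
      rcases lt_or_gt_of_ne hlj with h | h
      · rw [Nat.descFactorial_eq_zero_iff_lt.2 h]
        simp
      · rw [sub_self, zero_pow (by omega)]
        ring
    · intro h
      exact absurd (Finset.mem_range.2 (by omega)) h
  rw [hsum]
  rw [Nat.descFactorial_eq_factorial_mul_choose]
  have e1 : (2 : ℝ) ^ (ν + 1 - j) = 2 ^ (ν + 1) / 2 ^ j := by
    rw [eq_div_iff (by positivity), ← pow_add]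
    congr 1
    omega
  have e2 : (2 : ℝ) ^ (j - 1) = 2 ^ j / 2 := by
    rw [eq_div_iff two_ne_zero, ← pow_succ]
    congr 1
    omega
  rw [e1, e2]
  have h2j : (2 : ℝ) ^ j ≠ 0 := by positivity
  push_cast
  rw [pow_succ]
  field_simp
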